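/- Let k be a field of characteristic p > 0. In the rational function field k(t), there do not exist an element λ ∈ k(t) that is algebraic over k and an element q ∈ k(t) with t = λ + q^p − q. -/
import Mathlib

lemma intDegree_pow_aux {K : Type*} [Field K] (q : RatFunc K) (hq : q ≠ 0) (n : ℕ) :
    (q ^ n).intDegree = n * q.intDegree := by
  induction n with
  | zero => simp [RatFunc.intDegree_one]
  | succ n ih =>
    rw [pow_succ, RatFunc.intDegree_mul (pow_ne_zero n hq) hq, ih]
    push_cast; ring

/-- Lemma 3.5: Let `k` be a field of characteristic `p > 0`. In the rational
function field `k(t)`, there do not exist an element `λ ∈ k(t)` algebraic over `k` and an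
element `q ∈ k(t)` with `t = λ + q ^ p - q`. -/
theorem stmt1 (k : Type*) [Field k] (p : ℕ) (hp : p.Prime) [CharP k p] :
    ¬ ∃ (lam q : RatFunc k), IsAlgebraic k lam ∧
      (RatFunc.X : RatFunc k) = lam + (q ^ p - q) := by
  rintro ⟨lam, q, hal, heq⟩
  -- λ is integral over k[X], hence a polynomial since k[X] is integrally closed
  have hint : IsIntegral (Polynomial k) lam := (hal.isIntegral).tower_top
  obtain ⟨f, hf⟩ := IsIntegrallyClosed.isIntegral_iff.mp hint
  have hinj : Function.Injective (algebraMap (Polynomial k) (RatFunc k)) :=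
    IsFractionRing.injective _ _
  -- f is constant, since it is algebraic over k
  have hfdeg : f.natDegree = 0 := by
    by_contra hd
    have : Transcendental k f := Polynomial.transcendental f hd
      (mem_nonZeroDivisors_of_ne_zero (Polynomial.leadingCoeff_ne_zero.mpr
        (fun h0 => hd (by simp [h0]))))
    exact ((transcendental_algebraMap_iff hinj).mpr this) (hf ▸ hal)
  obtain ⟨c, rfl⟩ : ∃ c, f = Polynomial.C c :=
    ⟨f.coeff 0, Polynomial.eq_C_of_natDegree_eq_zero hfdeg⟩
  -- the degree argument: q^p - q = X - c has degree 1, which is impossible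
  have hS : q ^ p - q = algebraMap (Polynomial k) (RatFunc k)
      (Polynomial.X - Polynomial.C c) := by
    rw [map_sub, RatFunc.algebraMap_X, hf]
    linear_combination -heq
  have hS1 : (q ^ p - q).intDegree = 1 := by
    rw [hS, RatFunc.intDegree_polynomial, Polynomial.natDegree_X_sub_C]
    rfl
  have hS0 : q ^ p - q ≠ 0 := by
    intro h0; rw [h0, RatFunc.intDegree_zero] at hS1; exact one_ne_zero hS1.symm
  have hq0 : q ≠ 0 := by
    intro h0; apply hS0; rw [h0]; simp [zero_pow hp.ne_zero]
  set d := q.intDegree with hd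
  have hqp0 : q ^ p ≠ 0 := pow_ne_zero _ hq0
  have h1 : (1 : ℤ) ≤ max ((p : ℤ) * d) d := by
    have h := RatFunc.intDegree_add_le (x := q ^ p) (y := -q)
      (neg_ne_zero.mpr hq0) (by rwa [← sub_eq_add_neg])
    rw [← sub_eq_add_neg, hS1, RatFunc.intDegree_neg, intDegree_pow_aux q hq0 p] at h
    exact h
  have hd1 : 1 ≤ d := by
    by_contra h
    push_neg at h
    have hd0 : d ≤ 0 := by omega
    have : (p : ℤ) * d ≤ 0 := mul_nonpos_of_nonneg_of_nonpos (by positivity) hd0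
    omega
  have h2 : (p : ℤ) * d ≤ max 1 d := by
    have h := RatFunc.intDegree_add_le (x := q ^ p - q) (y := q) hq0
      (by rw [sub_add_cancel]; exact hqp0)
    rw [sub_add_cancel, hS1, intDegree_pow_aux q hq0 p] at h
    exact h
  have hp2 : (2 : ℤ) ≤ (p : ℤ) := by exact_mod_cast hp.two_le
  rw [max_eq_right hd1] at h2
  nlinarith
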